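/- For every integer k ≥ 2, the family of evaluations {ev(A) : A ∈ L(k)} is ℤ-linearly independent in the free Lie algebra over ℤ on k generators; in particular the evaluation map is injective on L(k) and these (k-1)! elements span a free ℤ-module of rank (k-1)!. -/

import Mathlib

/-- Formal expressions: complete binary bracketings with leaves labeled by natural numbers. -/
inductive BTree : Type
  | leaf : ℕ → BTree
  | node : BTree → BTree → BTree
  deriving DecidableEq

namespace BTree

/-- The list of leaf labels, read from left to right. -/
def leaves : BTree → List ℕ
  | leaf i => [i]
  | node l r => leaves l ++ leaves r

/-- In every bracket `[u,v]`, the minimum index occurs inside `u`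
and the maximum index occurs inside `v`. -/
def valid : BTree → Prop
  | leaf _ => True
  | node l r => valid l ∧ valid r ∧
      (∃ a ∈ leaves l, ∀ i ∈ leaves l ++ leaves r, a ≤ i) ∧
      (∃ b ∈ leaves r, ∀ i ∈ leaves l ++ leaves r, i ≤ b)

/-- Membership in `L n`: the leaf labels are exactly `1, …, n`, each occurring
exactly once (in any order), and the min/max condition holds at every bracket. -/
def memL (n : ℕ) (t : BTree) : Prop :=
  (leaves t).Perm (List.range' 1 n) ∧ valid t

end BTree

namespace BTree

/-- Evaluation of a formal bracketing in the free Lie ring (free Lie algebra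
over `ℤ`) on generators indexed by `ℕ`. -/
noncomputable def ev : BTree → FreeLieAlgebra ℤ ℕ
  | leaf i => FreeLieAlgebra.of ℤ i
  | node l r => ⁅ev l, ev r⁆

end BTree

attribute [local instance] LieRing.ofAssociativeRing

namespace BTree

/-! ### The associative picture: noncommutative polynomials -/

/-- The word algebra. -/
local notation "Ω" => MonoidAlgebra ℤ (FreeMonoid ℕ)

/-- Evaluation in the free associative algebra (as a monoid algebra on words),
with the bracket interpreted as a commutator. -/
noncomputable def P : BTree → MonoidAlgebra ℤ (FreeMonoid ℕ)
  | leaf i => MonoidAlgebra.single (FreeMonoid.ofList [i]) 1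
  | node l r => P l * P r - P r * P l

/-- Coefficient of a word. -/
def coeff (w : List ℕ) (p : MonoidAlgebra ℤ (FreeMonoid ℕ)) : ℤ := p.coeff (FreeMonoid.ofList w)

lemma coeff_sub (w : List ℕ) (p q : MonoidAlgebra ℤ (FreeMonoid ℕ)) :
    coeff w (p - q) = coeff w p - coeff w q := Finsupp.sub_apply _ _ _

/-- The coefficient functional, as an additive monoid hom. -/
noncomputable def coeffₐ (w : List ℕ) : MonoidAlgebra ℤ (FreeMonoid ℕ) →+ ℤ where
  toFun p := coeff w p
  map_zero' := rfl
  map_add' p q := Finsupp.add_apply _ _ _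

/-- The homomorphism from the free Lie algebra to the word algebra. -/
noncomputable def φ : FreeLieAlgebra ℤ ℕ →ₗ⁅ℤ⁆ MonoidAlgebra ℤ (FreeMonoid ℕ) :=
  FreeLieAlgebra.lift ℤ (fun i => MonoidAlgebra.single (FreeMonoid.ofList [i]) (1:ℤ))

lemma φ_ev : ∀ t : BTree, φ (ev t) = P t := by
  intro t
  induction t with
  | leaf i => exact FreeLieAlgebra.lift_of_apply (R := ℤ) _ _
  | node l r hl hr =>
      show φ ⁅ev l, ev r⁆ = P (node l r)
      rw [LieHom.map_lie, hl, hr, Ring.lie_def]; rfl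

/-- If a word has nonzero coefficient in a product, it splits. -/
lemma exists_of_coeff_mul_ne_zero {p q : MonoidAlgebra ℤ (FreeMonoid ℕ)} {x : FreeMonoid ℕ}
    (h : (p * q).coeff x ≠ 0) : ∃ a b, a * b = x ∧ p.coeff a ≠ 0 ∧ q.coeff b ≠ 0 := by
  classical
  rw [MonoidAlgebra.mul_apply] at h
  rw [Finsupp.sum] at h
  obtain ⟨a, ha, hne⟩ := Finset.exists_ne_zero_of_sum_ne_zero h
  rw [Finsupp.sum] at hne
  obtain ⟨b, hb, hne2⟩ := Finset.exists_ne_zero_of_sum_ne_zero hne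
  by_cases hab : a * b = x
  · exact ⟨a, b, hab, Finsupp.mem_support_iff.mp ha, Finsupp.mem_support_iff.mp hb⟩
  · simp [hab] at hne2

/-- Every word with nonzero coefficient in `P t` is a permutation of the leaves. -/
lemma coeff_perm : ∀ t : BTree, ∀ w : List ℕ, coeff w (P t) ≠ 0 → w.Perm (leaves t) := by
  intro t
  classical
  induction t with
  | leaf i =>
      intro w hw
      rw [coeff, P, MonoidAlgebra.coeff_single, Finsupp.single_apply] at hw
      by_cases h : (FreeMonoid.ofList [i] : FreeMonoid ℕ) = FreeMonoid.ofList w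
      · have hwi : w = [i] := (congrArg FreeMonoid.toList h).symm
        rw [hwi]
        exact List.Perm.refl _
      · rw [if_neg h] at hw; exact absurd rfl hw
  | node l r hl hr =>
      intro w hw
      rw [P, coeff, MonoidAlgebra.coeff_sub, Finsupp.sub_apply] at hw
      have : (P l * P r).coeff (FreeMonoid.ofList w) ≠ 0 ∨ (P r * P l).coeff (FreeMonoid.ofList w) ≠ 0 := by
        by_contra hc
        push_neg at hc
        rw [hc.1, hc.2] at hw; simp at hw
      have key : ∀ (s t' : BTree), (∀ w, coeff w (P s) ≠ 0 → w.Perm (leaves s)) →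
          (∀ w, coeff w (P t') ≠ 0 → w.Perm (leaves t')) →
          (P s * P t').coeff (FreeMonoid.ofList w) ≠ 0 → w.Perm (leaves s ++ leaves t') := by
        intro s t' hs ht' hmul
        obtain ⟨a, b, hab, hpa, hpb⟩ := exists_of_coeff_mul_ne_zero hmul
        have ha' : (FreeMonoid.toList a).Perm (leaves s) := hs _ hpa
        have hb' : (FreeMonoid.toList b).Perm (leaves t') := ht' _ hpb
        have : FreeMonoid.toList a ++ FreeMonoid.toList b = w := congrArg FreeMonoid.toList hab
        rw [← this]
        exact ha'.append hb'
      show w.Perm (leaves l ++ leaves r)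
      rcases this with h | h
      · exact key l r hl hr h
      · exact (key r l hr hl h).trans List.perm_append_comm

/-- Splitting a coefficient of a product when the left factor is homogeneous of length `n`. -/
lemma coeff_mul_split {p q : MonoidAlgebra ℤ (FreeMonoid ℕ)} {n : ℕ}
    (hp : ∀ u : FreeMonoid ℕ, p.coeff u ≠ 0 → (FreeMonoid.toList u).length = n) (w : List ℕ) :
    coeff w (p * q) = coeff (w.take n) p * coeff (w.drop n) q := by
  classical
  rw [coeff, MonoidAlgebra.mul_apply, Finsupp.sum]
  have step1 : ∀ a ∈ p.coeff.support,
      (q.coeff.sum fun a₂ b₂ => if a * a₂ = FreeMonoid.ofList w then p.coeff a * b₂ else 0)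
      = if a = FreeMonoid.ofList (w.take n) then
          p.coeff a * q.coeff (FreeMonoid.ofList (w.drop n)) else 0 := by
    intro a ha
    have hlen : (FreeMonoid.toList a).length = n := hp a (Finsupp.mem_support_iff.mp ha)
    by_cases hea : a = FreeMonoid.ofList (w.take n)
    · subst hea
      have hlen' : (w.take n).length = n := hlen
      rw [if_pos rfl]
      have hiff : ∀ a₂ : FreeMonoid ℕ,
          (FreeMonoid.ofList (w.take n) * a₂ = FreeMonoid.ofList w) ↔
          a₂ = FreeMonoid.ofList (w.drop n) := by
        intro a₂
        constructor
        · intro h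
          have h' : w.take n ++ FreeMonoid.toList a₂ = w := congrArg FreeMonoid.toList h
          have : FreeMonoid.toList a₂ = w.drop n := by
            have := congrArg (List.drop n) h'
            rwa [List.drop_append, List.drop_eq_nil_of_le (by simp [hlen']),
              hlen', Nat.sub_self, List.nil_append, List.drop_zero] at this
          exact congrArg FreeMonoid.ofList this
        · rintro rfl
          exact congrArg FreeMonoid.ofList (List.take_append_drop n w)
      rw [Finsupp.sum]
      rw [Finset.sum_congr rfl (fun a₂ _ => by rw [show (FreeMonoid.ofList (w.take n) * a₂ =
        FreeMonoid.ofList w) = (a₂ = FreeMonoid.ofList (w.drop n)) from propext (hiff a₂)])]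
      rw [Finset.sum_ite_eq' q.coeff.support (FreeMonoid.ofList (w.drop n))
        (fun a₂ => p.coeff (FreeMonoid.ofList (w.take n)) * q.coeff a₂)]
      by_cases hmem : FreeMonoid.ofList (w.drop n) ∈ q.coeff.support
      · rw [if_pos hmem]
      · rw [if_neg hmem, Finsupp.notMem_support_iff.mp hmem, mul_zero]
    · rw [if_neg hea, Finsupp.sum]
      apply Finset.sum_eq_zero
      intro a₂ _
      rw [if_neg]
      intro h
      apply hea
      have h' : FreeMonoid.toList a ++ FreeMonoid.toList a₂ = w := congrArg FreeMonoid.toList h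
      have : FreeMonoid.toList a = w.take n := by
        have := congrArg (List.take n) h'
        rwa [List.take_append, List.take_of_length_le hlen.le, hlen,
          Nat.sub_self, List.take_zero, List.append_nil] at this
      exact congrArg FreeMonoid.ofList this
  rw [Finset.sum_congr rfl step1,
    Finset.sum_ite_eq' p.coeff.support (FreeMonoid.ofList (w.take n))
      (fun a => p.coeff a * q.coeff (FreeMonoid.ofList (w.drop n)))]
  by_cases hmem : FreeMonoid.ofList (w.take n) ∈ p.coeff.support
  · rw [if_pos hmem]; rfl
  · rw [if_neg hmem]
    rw [coeff, Finsupp.notMem_support_iff.mp hmem, zero_mul]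

/-! ### Canonical words and the triangular order -/

mutual
/-- The min-first reading of a tree. -/
def mw : BTree → List ℕ
  | leaf i => [i]
  | node l r => mw l ++ Mw r
/-- The max-first reading of a tree. -/
def Mw : BTree → List ℕ
  | leaf i => [i]
  | node l r => Mw r ++ mw l
end

lemma mw_Mw_perm : ∀ t : BTree, (mw t).Perm (leaves t) ∧ (Mw t).Perm (leaves t) := by
  intro t
  induction t with
  | leaf i => exact ⟨List.Perm.refl _, List.Perm.refl _⟩
  | node l r hl hr =>
      constructor
      · show (mw l ++ Mw r).Perm (leaves l ++ leaves r)
        exact hl.1.append hr.2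
      · show (Mw r ++ mw l).Perm (leaves l ++ leaves r)
        exact (hr.2.append hl.1).trans List.perm_append_comm

lemma leaves_ne_nil : ∀ t : BTree, leaves t ≠ [] := by
  intro t
  induction t with
  | leaf i => simp [leaves]
  | node l r hl _ =>
      intro h
      exact hl (List.append_eq_nil_iff.mp h).1

lemma leaves_len_pos (t : BTree) : 0 < (leaves t).length :=
  List.length_pos_iff.mpr (leaves_ne_nil t)

/-- For a valid tree, `mw` starts with the minimum leaf and `Mw` with the maximum. -/
lemma head_mw_Mw : ∀ t : BTree, valid t →
    (∃ x tl, mw t = x :: tl ∧ x ∈ leaves t ∧ ∀ i ∈ leaves t, x ≤ i) ∧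
    (∃ y tl, Mw t = y :: tl ∧ y ∈ leaves t ∧ ∀ i ∈ leaves t, i ≤ y) := by
  intro t
  induction t with
  | leaf i =>
      exact fun _ => ⟨⟨i, [], rfl, by simp [leaves], by simp [leaves]⟩,
        ⟨i, [], rfl, by simp [leaves], by simp [leaves]⟩⟩
  | node l r hl hr =>
      rintro ⟨hvl, hvr, ⟨a, ha, hamin⟩, ⟨b, hb, hbmax⟩⟩
      obtain ⟨⟨x, tl, hxtl, hxmem, hxmin⟩, -⟩ := hl hvl
      obtain ⟨-, ⟨y, tl', hytl, hymem, hymax⟩⟩ := hr hvr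
      constructor
      · refine ⟨x, tl ++ Mw r, ?_, ?_, ?_⟩
        · show mw l ++ Mw r = x :: (tl ++ Mw r); rw [hxtl]; rfl
        · show x ∈ leaves l ++ leaves r; exact List.mem_append_left _ hxmem
        · intro i hi
          exact le_trans (hxmin a ha) (hamin i hi)
      · refine ⟨y, tl' ++ mw l, ?_, ?_, ?_⟩
        · show Mw r ++ mw l = y :: (tl' ++ mw l); rw [hytl]; rfl
        · show y ∈ leaves l ++ leaves r; exact List.mem_append_right _ hymem
        · intro i hi
          exact le_trans (hbmax i hi) (hymax b hb)

mutual
/-- The strict order (min-reading version) making the coefficient matrix triangular. -/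
def ordm : BTree → BTree → Prop
  | node a b, node u v => (leaves u).length < (leaves a).length ∨
      ((leaves a).length = (leaves u).length ∧ (ordm a u ∨ (a = u ∧ ordM b v)))
  | _, _ => False
/-- The strict order (max-reading version). -/
def ordM : BTree → BTree → Prop
  | node a b, node u v => (leaves v).length < (leaves b).length ∨
      ((leaves b).length = (leaves v).length ∧ (ordM b v ∨ (b = v ∧ ordm a u)))
  | _, _ => False
end

lemma ord_irrefl : ∀ t : BTree, ¬ ordm t t ∧ ¬ ordM t t := by
  intro t
  induction t with
  | leaf i => exact ⟨fun h => h, fun h => h⟩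
  | node l r hl hr =>
      constructor
      · rw [ordm]
        rintro (h | ⟨-, h | ⟨-, h⟩⟩)
        · exact lt_irrefl _ h
        · exact hl.1 h
        · exact hr.2 h
      · rw [ordM]
        rintro (h | ⟨-, h | ⟨-, h⟩⟩)
        · exact lt_irrefl _ h
        · exact hr.2 h
        · exact hl.1 h

lemma ord_trans : ∀ A B C : BTree,
    (ordm A B → ordm B C → ordm A C) ∧ (ordM A B → ordM B C → ordM A C) := by
  intro A
  induction A with
  | leaf i => exact fun B C => ⟨fun h => absurd h (by cases B <;> exact fun h => h),
      fun h => absurd h (by cases B <;> exact fun h => h)⟩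
  | node a b iha ihb =>
      intro B C
      constructor
      · intro h1 h2
        match B, C with
        | leaf _, _ => exact absurd h1 (fun h => h)
        | node u v, leaf _ => exact absurd h2 (fun h => h)
        | node u v, node p q =>
          rw [ordm] at h1 h2 ⊢
          rcases h1 with h1 | ⟨e1, h1⟩
          · rcases h2 with h2 | ⟨e2, -⟩
            · exact Or.inl (lt_trans h2 h1)
            · exact Or.inl (e2 ▸ h1)
          · rcases h2 with h2 | ⟨e2, h2⟩
            · exact Or.inl (e1 ▸ h2)
            · refine Or.inr ⟨e1.trans e2, ?_⟩
              rcases h1 with h1 | ⟨rfl, h1⟩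
              · rcases h2 with h2 | ⟨rfl, -⟩
                · exact Or.inl ((iha u p).1 h1 h2)
                · exact Or.inl h1
              · rcases h2 with h2 | ⟨rfl, h2⟩
                · exact Or.inl h2
                · exact Or.inr ⟨rfl, (ihb v q).2 h1 h2⟩
      · intro h1 h2
        match B, C with
        | leaf _, _ => exact absurd h1 (fun h => h)
        | node u v, leaf _ => exact absurd h2 (fun h => h)
        | node u v, node p q =>
          rw [ordM] at h1 h2 ⊢
          rcases h1 with h1 | ⟨e1, h1⟩
          · rcases h2 with h2 | ⟨e2, -⟩
            · exact Or.inl (lt_trans h2 h1)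
            · exact Or.inl (e2 ▸ h1)
          · rcases h2 with h2 | ⟨e2, h2⟩
            · exact Or.inl (e1 ▸ h2)
            · refine Or.inr ⟨e1.trans e2, ?_⟩
              rcases h1 with h1 | ⟨rfl, h1⟩
              · rcases h2 with h2 | ⟨rfl, -⟩
                · exact Or.inl ((ihb v q).2 h1 h2)
                · exact Or.inl h1
              · rcases h2 with h2 | ⟨rfl, h2⟩
                · exact Or.inl h2
                · exact Or.inr ⟨rfl, (iha u p).1 h1 h2⟩

/-! ### Coefficient computations -/

lemma coeff_toList (s : BTree) (u : FreeMonoid ℕ) : coeff (FreeMonoid.toList u) (P s) = (P s).coeff u := rfl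

lemma len_of_coeff_ne_zero (s : BTree) (u : FreeMonoid ℕ) (h : (P s).coeff u ≠ 0) :
    (FreeMonoid.toList u).length = (leaves s).length :=
  (coeff_perm s _ h).length_eq

lemma coeff_P_node (l r : BTree) (w : List ℕ) :
    coeff w (P (node l r)) =
      coeff (w.take (leaves l).length) (P l) * coeff (w.drop (leaves l).length) (P r)
      - coeff (w.take (leaves r).length) (P r) * coeff (w.drop (leaves r).length) (P l) := by
  rw [P, coeff_sub, coeff_mul_split (len_of_coeff_ne_zero l) w,
    coeff_mul_split (len_of_coeff_ne_zero r) w]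

lemma mem_take_head {x : ℕ} (tl : List ℕ) {n : ℕ} (hn : 0 < n) : x ∈ (x :: tl).take n := by
  cases n with
  | zero => omega
  | succ n => rw [List.take_succ_cons]; exact List.mem_cons_self

lemma coeff_take_zero {s : BTree} {x : ℕ} (tl : List ℕ) (hx : x ∉ leaves s) {n : ℕ}
    (hn : 0 < n) : coeff ((x :: tl).take n) (P s) = 0 := by
  by_contra h
  exact hx ((coeff_perm s _ h).subset (mem_take_head tl hn))

lemma len_mw (t : BTree) : (mw t).length = (leaves t).length := (mw_Mw_perm t).1.length_eq
lemma len_Mw (t : BTree) : (Mw t).length = (leaves t).length := (mw_Mw_perm t).2.length_eq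

lemma unit_coeff : ∀ t : BTree, valid t → (leaves t).Nodup →
    IsUnit (coeff (mw t) (P t)) ∧ IsUnit (coeff (Mw t) (P t)) := by
  intro t
  induction t with
  | leaf i =>
      intro _ _
      classical
      have h1 : coeff [i] (P (leaf i)) = 1 := by
        rw [P, coeff, MonoidAlgebra.coeff_single, Finsupp.single_apply, if_pos rfl]
      exact ⟨show IsUnit (coeff [i] (P (leaf i))) by rw [h1]; exact isUnit_one,
        show IsUnit (coeff [i] (P (leaf i))) by rw [h1]; exact isUnit_one⟩
  | node l r ihl ihr =>
      rintro ⟨hvl, hvr, hmin, hmax⟩ hnd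
      have hnd' : (leaves l ++ leaves r).Nodup := hnd
      have hndl : (leaves l).Nodup := hnd'.of_append_left
      have hndr : (leaves r).Nodup := hnd'.of_append_right
      have hdisj : (leaves l).Disjoint (leaves r) := List.disjoint_of_nodup_append hnd'
      obtain ⟨hul, hur⟩ := ihl hvl hndl
      obtain ⟨hvl', hvr'⟩ := ihr hvr hndr
      obtain ⟨⟨x, tx, hxe, hxm, -⟩, -⟩ := head_mw_Mw l hvl
      obtain ⟨-, ⟨y, ty, hye, hym, -⟩⟩ := head_mw_Mw r hvr
      constructor
      · have hz : coeff ((mw l ++ Mw r).take (leaves r).length) (P r) = 0 := by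
          rw [hxe, List.cons_append]
          exact coeff_take_zero _ (fun hc => hdisj hxm hc) (leaves_len_pos r)
        rw [show mw (node l r) = mw l ++ Mw r from rfl, coeff_P_node, hz, zero_mul, sub_zero,
          List.take_left' (by rw [len_mw]), List.drop_left' (by rw [len_mw])]
        exact hul.mul hvr'
      · have hz : coeff ((Mw r ++ mw l).take (leaves l).length) (P l) = 0 := by
          rw [hye, List.cons_append]
          exact coeff_take_zero _ (fun hc => hdisj hc hym) (leaves_len_pos l)
        rw [show Mw (node l r) = Mw r ++ mw l from rfl, coeff_P_node, hz, zero_mul, zero_sub,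
          List.take_left' (by rw [len_Mw]), List.drop_left' (by rw [len_Mw])]
        exact (hvr'.mul hul).neg

/-! ### The triangularity lemma -/

lemma triang : ∀ B : BTree, valid B → (leaves B).Nodup →
    ∀ A : BTree, valid A → (leaves A).Nodup → (leaves A).Perm (leaves B) →
    (coeff (mw A) (P B) ≠ 0 → A = B ∨ ordm A B) ∧
    (coeff (Mw A) (P B) ≠ 0 → A = B ∨ ordM A B) := by
  intro B
  induction B with
  | leaf i =>
      intro _ _ A hvA hndA hperm
      cases A with
      | leaf j =>
          have hj : j = i := by
            have h := List.perm_singleton.mp (show [j].Perm [i] from hperm)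
            simpa using h
          subst hj
          exact ⟨fun _ => Or.inl rfl, fun _ => Or.inl rfl⟩
      | node a b =>
          exfalso
          have h1 := hperm.length_eq
          have h2 := leaves_len_pos a
          have h3 := leaves_len_pos b
          simp only [leaves, List.length_append, List.length_cons, List.length_nil] at h1
          omega
  | node u v ihu ihv =>
      intro hvB hndB A hvA hndA hperm
      obtain ⟨hvu, hvv, ⟨xB, hxBu, hxBmin⟩, ⟨yB, hyBv, hyBmax⟩⟩ := hvB
      have hndB' : (leaves u ++ leaves v).Nodup := hndB
      have hndu : (leaves u).Nodup := hndB'.of_append_left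
      have hndv : (leaves v).Nodup := hndB'.of_append_right
      have hdisjB : (leaves u).Disjoint (leaves v) := List.disjoint_of_nodup_append hndB'
      cases A with
      | leaf j =>
          exfalso
          have h1 := hperm.length_eq
          have h2 := leaves_len_pos u
          have h3 := leaves_len_pos v
          simp only [leaves, List.length_append, List.length_cons, List.length_nil] at h1
          omega
      | node a b =>
          obtain ⟨hva, hvb, ⟨xA, hxAa, hxAmin⟩, ⟨yA, hyAb, hyAmax⟩⟩ := hvA
          have hndA' : (leaves a ++ leaves b).Nodup := hndA
          have hnda : (leaves a).Nodup := hndA'.of_append_left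
          have hndb : (leaves b).Nodup := hndA'.of_append_right
          obtain ⟨⟨x, tx, hxe, hxm, hxmin⟩, -⟩ := head_mw_Mw a hva
          obtain ⟨-, ⟨y, ty, hye, hym, hymax⟩⟩ := head_mw_Mw b hvb
          have hxminA : ∀ i ∈ leaves a ++ leaves b, x ≤ i := fun i hi =>
            le_trans (hxmin xA hxAa) (hxAmin i hi)
          have hymaxA : ∀ i ∈ leaves a ++ leaves b, i ≤ y := fun i hi =>
            le_trans (hyAmax i hi) (hymax yA hyAb)
          have hxminB : ∀ i ∈ leaves u ++ leaves v, x ≤ i := fun i hi =>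
            hxminA i (hperm.symm.subset hi)
          have hymaxB : ∀ i ∈ leaves u ++ leaves v, i ≤ y := fun i hi =>
            hymaxA i (hperm.symm.subset hi)
          have hxnv : x ∉ leaves v := by
            intro hxv
            have h1 : xB ≤ x := hxBmin x (List.mem_append_right _ hxv)
            have h2 : x ≤ xB := hxminB xB (List.mem_append_left _ hxBu)
            exact hdisjB ((le_antisymm h2 h1) ▸ hxBu) hxv
          have hynu : y ∉ leaves u := by
            intro hyu
            have h1 : y ≤ yB := hyBmax y (List.mem_append_left _ hyu)
            have h2 : yB ≤ y := hymaxB yB (List.mem_append_right _ hyBv)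
            exact hdisjB hyu ((le_antisymm h1 h2) ▸ hyBv)
          have hxu : x ∈ leaves u := by
            have h := hperm.subset (List.mem_append_left _ hxm)
            rcases List.mem_append.mp h with h' | h'
            · exact h'
            · exact absurd h' hxnv
          have hyv : y ∈ leaves v := by
            have h := hperm.subset (List.mem_append_right _ hym)
            rcases List.mem_append.mp h with h' | h'
            · exact absurd h' hynu
            · exact h'
          constructor
          · intro hc
            rw [show mw (node a b) = mw a ++ Mw b from rfl, coeff_P_node] at hc
            have hz : coeff ((mw a ++ Mw b).take (leaves v).length) (P v) = 0 := by
              rw [hxe, List.cons_append]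
              exact coeff_take_zero _ hxnv (leaves_len_pos v)
            rw [hz, zero_mul, sub_zero] at hc
            have h1 : coeff ((mw a ++ Mw b).take (leaves u).length) (P u) ≠ 0 :=
              left_ne_zero_of_mul hc
            have h2 : coeff ((mw a ++ Mw b).drop (leaves u).length) (P v) ≠ 0 :=
              right_ne_zero_of_mul hc
            have hle : (leaves u).length ≤ (leaves a).length := by
              by_contra hlt
              push_neg at hlt
              have hytake : y ∈ (mw a ++ Mw b).take (leaves u).length := by
                rw [List.take_append,
                  List.take_of_length_le (by rw [len_mw]; omega), hye]
                refine List.mem_append_right _ (mem_take_head _ ?_)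
                rw [len_mw]; omega
              exact hynu ((coeff_perm u _ h1).subset hytake)
            rcases lt_or_eq_of_le hle with hlt | heq
            · right; rw [ordm]; exact Or.inl hlt
            · have htake : (mw a ++ Mw b).take (leaves u).length = mw a :=
                List.take_left' (by rw [len_mw, heq])
              have hdrop : (mw a ++ Mw b).drop (leaves u).length = Mw b :=
                List.drop_left' (by rw [len_mw, heq])
              rw [htake] at h1
              rw [hdrop] at h2
              have hpau : (leaves a).Perm (leaves u) :=
                ((mw_Mw_perm a).1.symm.trans (coeff_perm u _ h1))
              have hpbv : (leaves b).Perm (leaves v) :=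
                ((mw_Mw_perm b).2.symm.trans (coeff_perm v _ h2))
              rcases (ihu hvu hndu a hva hnda hpau).1 h1 with rfl | hma
              · rcases (ihv hvv hndv b hvb hndb hpbv).2 h2 with rfl | hMb
                · exact Or.inl rfl
                · right; rw [ordm]; exact Or.inr ⟨heq.symm, Or.inr ⟨rfl, hMb⟩⟩
              · right; rw [ordm]; exact Or.inr ⟨heq.symm, Or.inl hma⟩
          · intro hc
            rw [show Mw (node a b) = Mw b ++ mw a from rfl, coeff_P_node] at hc
            have hz : coeff ((Mw b ++ mw a).take (leaves u).length) (P u) = 0 := by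
              rw [hye, List.cons_append]
              exact coeff_take_zero _ hynu (leaves_len_pos u)
            rw [hz, zero_mul, zero_sub, neg_ne_zero] at hc
            have h1 : coeff ((Mw b ++ mw a).take (leaves v).length) (P v) ≠ 0 :=
              left_ne_zero_of_mul hc
            have h2 : coeff ((Mw b ++ mw a).drop (leaves v).length) (P u) ≠ 0 :=
              right_ne_zero_of_mul hc
            have hle : (leaves v).length ≤ (leaves b).length := by
              by_contra hlt
              push_neg at hlt
              have hxtake : x ∈ (Mw b ++ mw a).take (leaves v).length := by
                rw [List.take_append,
                  List.take_of_length_le (by rw [len_Mw]; omega), hxe]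
                refine List.mem_append_right _ (mem_take_head _ ?_)
                rw [len_Mw]; omega
              exact hxnv ((coeff_perm v _ h1).subset hxtake)
            rcases lt_or_eq_of_le hle with hlt | heq
            · right; rw [ordM]; exact Or.inl hlt
            · have htake : (Mw b ++ mw a).take (leaves v).length = Mw b :=
                List.take_left' (by rw [len_Mw, heq])
              have hdrop : (Mw b ++ mw a).drop (leaves v).length = mw a :=
                List.drop_left' (by rw [len_Mw, heq])
              rw [htake] at h1
              rw [hdrop] at h2
              have hpbv : (leaves b).Perm (leaves v) :=
                ((mw_Mw_perm b).2.symm.trans (coeff_perm v _ h1))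
              have hpau : (leaves a).Perm (leaves u) :=
                ((mw_Mw_perm a).1.symm.trans (coeff_perm u _ h2))
              rcases (ihv hvv hndv b hvb hndb hpbv).2 h1 with rfl | hMb
              · rcases (ihu hvu hndu a hva hnda hpau).1 h2 with rfl | hma
                · exact Or.inl rfl
                · right; rw [ordM]; exact Or.inr ⟨heq.symm, Or.inr ⟨rfl, hma⟩⟩
              · right; rw [ordM]; exact Or.inr ⟨heq.symm, Or.inl hMb⟩

/-! ### Existence of a maximal element -/

lemma exists_ordm_maximal : ∀ s : Finset BTree, s.Nonempty →
    ∃ a ∈ s, ∀ b ∈ s, ¬ ordm a b := by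
  classical
  intro s
  induction s using Finset.strongInduction with
  | _ s ih =>
    intro hs
    obtain ⟨a, ha⟩ := hs
    by_cases hmax : ∀ b ∈ s, ¬ ordm a b
    · exact ⟨a, ha, hmax⟩
    · push_neg at hmax
      obtain ⟨b, hb, hab⟩ := hmax
      have hss : s.filter (fun x => ordm a x) ⊂ s := by
        refine (Finset.ssubset_iff_of_subset (Finset.filter_subset _ _)).mpr ?_
        exact ⟨a, ha, by simp [(ord_irrefl a).1]⟩
      obtain ⟨c, hc, hcmax⟩ := ih _ hss ⟨b, by simp [hb, hab]⟩
      have hac : ordm a c := (Finset.mem_filter.mp hc).2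
      refine ⟨c, (Finset.mem_filter.mp hc).1, ?_⟩
      intro d hd hcd
      exact hcmax d (by simp [hd, (ord_trans a c d).1 hac hcd]) hcd

end BTree

/-- For every `k ≥ 2`, the family of evaluations `{ev A : A ∈ L(k)}` is
`ℤ`-linearly independent in the free Lie algebra over `ℤ`; in particular the
evaluation map is injective on `L(k)`. -/
theorem linearIndependent_ev_L (k : ℕ) (hk : 2 ≤ k) :
    LinearIndependent ℤ (fun t : {t : BTree // BTree.memL k t} => BTree.ev t.1) ∧
    Set.InjOn BTree.ev {t : BTree | BTree.memL k t} := by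
  classical
  have hnodup : ∀ X : BTree, BTree.memL k X → (BTree.leaves X).Nodup := by
    intro X hX
    exact hX.1.nodup_iff.mpr List.nodup_range'
  have key : LinearIndependent ℤ (fun t : {t : BTree // BTree.memL k t} => BTree.ev t.1) := by
    rw [linearIndependent_iff]
    intro l hl
    by_contra hne
    have hsupp : l.support.Nonempty := Finsupp.support_nonempty_iff.mpr hne
    have hS : (l.support.image Subtype.val).Nonempty := hsupp.image _
    obtain ⟨Am, hAmS, hAmax⟩ := BTree.exists_ordm_maximal _ hS
    obtain ⟨t0, ht0, ht0v⟩ := Finset.mem_image.mp hAmS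
    have hAmem : BTree.memL k Am := ht0v ▸ t0.2
    set G : FreeLieAlgebra ℤ ℕ →+ ℤ :=
      (BTree.coeffₐ (BTree.mw Am)).comp (BTree.φ.toLinearMap.toAddMonoidHom) with hG
    have hGev : ∀ X : BTree, G (BTree.ev X) = BTree.coeff (BTree.mw Am) (BTree.P X) := by
      intro X
      show BTree.coeff (BTree.mw Am) (BTree.φ (BTree.ev X)) = _
      rw [BTree.φ_ev X]
    have h0 : G (Finsupp.linearCombination ℤ (fun t : {t // BTree.memL k t} => BTree.ev t.1) l) = 0 := by
      rw [hl]; exact map_zero G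
    rw [Finsupp.linearCombination_apply, map_finsuppSum] at h0
    have h0' : (l.sum fun t a => a * BTree.coeff (BTree.mw Am) (BTree.P t.1)) = 0 := by
      rw [← h0]
      apply Finsupp.sum_congr
      intro t _
      rw [map_zsmul, hGev, smul_eq_mul]
    rw [Finsupp.sum, Finset.sum_eq_single t0 ?hother ?hnotmem] at h0'
    case hnotmem => intro h; exact absurd ht0 h
    case hother =>
      intro t ht htne
      have hcz : BTree.coeff (BTree.mw Am) (BTree.P t.1) = 0 := by
        by_contra hcne
        rcases (BTree.triang t.1 t.2.2 (hnodup _ t.2) Am hAmem.2 (hnodup _ hAmem)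
          (hAmem.1.trans t.2.1.symm)).1 hcne with heq | hord
        · exact htne (Subtype.ext (heq.symm.trans ht0v.symm))
        · exact hAmax t.1 (Finset.mem_image.mpr ⟨t, ht, rfl⟩) hord
      rw [hcz, mul_zero]
    have hunit := (BTree.unit_coeff Am hAmem.2 (hnodup _ hAmem)).1
    rw [ht0v] at h0'
    have hl0 : l t0 = 0 := by
      rcases Int.isUnit_iff.mp hunit with h | h <;> rw [h] at h0' <;> omega
    exact (Finsupp.mem_support_iff.mp ht0) hl0
  refine ⟨key, ?_⟩
  intro x hx y hy hxy
  have := key.injective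
    (show BTree.ev (⟨x, hx⟩ : {t : BTree // BTree.memL k t}).1 =
      BTree.ev (⟨y, hy⟩ : {t : BTree // BTree.memL k t}).1 from hxy)
  exact congrArg Subtype.val this
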